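/- Let λ > 0, l ∈ [0,1] and s₁, s₂ > 0. Then ∫₀^∞ (v·s₂/s₁)·(∫_{v·s₂/s₁}^∞ λ·e^{−λu} du)·λ·e^{−λv} dv + l·∫₀^∞ (v·s₁/s₂)·(∫_{v·s₁/s₂}^∞ λ·e^{−λu} du)·λ·e^{−λv} dv = ((1+l)/λ)·(s₁·s₂)/(s₁+s₂)². Consequently this quantity is at most (1+l)/(4λ), with equality if and only if s₁ = s₂. -/

import Mathlib

open MeasureTheory Set Real

/-- Expected revenue of the two-bidder click-through auction with CTR pair `(1,l)`,
i.i.d. exponential values with rate `lam`, and signals `(s₁, s₂)`. -/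
noncomputable def expRev (lam l s₁ s₂ : ℝ) : ℝ :=
  (∫ v in Set.Ioi (0 : ℝ),
      (v * s₂ / s₁) * (∫ u in Set.Ioi (v * s₂ / s₁), lam * Real.exp (-lam * u))
        * (lam * Real.exp (-lam * v)))
  + l * ∫ v in Set.Ioi (0 : ℝ),
      (v * s₁ / s₂) * (∫ u in Set.Ioi (v * s₁ / s₂), lam * Real.exp (-lam * u))
        * (lam * Real.exp (-lam * v))

lemma innerInt (lam a : ℝ) (hlam : 0 < lam) :
    (∫ u in Ioi a, lam * Real.exp (-lam * u)) = Real.exp (-lam * a) := by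
  have h := integral_comp_mul_left_Ioi (fun x => Real.exp (-x)) a hlam
  simp only [integral_exp_neg_Ioi, smul_eq_mul] at h
  calc (∫ u in Ioi a, lam * Real.exp (-lam * u))
      = lam * ∫ u in Ioi a, Real.exp (-(lam * u)) := by
        rw [integral_const_mul]; simp [neg_mul]
    _ = Real.exp (-lam * a) := by rw [h]; field_simp [neg_mul]

lemma sideInt (lam c : ℝ) (hlam : 0 < lam) (hc : 0 < c) :
    (∫ v in Ioi (0:ℝ), (v * c) * (∫ u in Ioi (v * c), lam * Real.exp (-lam * u))
        * (lam * Real.exp (-lam * v))) = c / (lam * (1 + c) ^ 2) := by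
  have hr : 0 < lam * (1 + c) := by positivity
  have key : ∀ v : ℝ, (v * c) * (∫ u in Ioi (v * c), lam * Real.exp (-lam * u))
        * (lam * Real.exp (-lam * v))
      = (lam * c) * (v ^ ((2:ℝ) - 1) * Real.exp (-(lam * (1 + c) * v))) := by
    intro v
    rw [innerInt lam _ hlam]
    rw [show ((2:ℝ) - 1) = 1 by norm_num, Real.rpow_one,
      show (-(lam * (1 + c) * v)) = (-lam * (v*c)) + (-lam * v) by ring, Real.exp_add]
    ring
  simp_rw [key]
  rw [integral_const_mul, integral_rpow_mul_exp_neg_mul_Ioi (by norm_num) hr,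
    Real.Gamma_two, mul_one,
    show ((2:ℝ)) = ((2:ℕ):ℝ) by norm_num, Real.rpow_natCast]
  field_simp

/-- For exponential values, the expected revenue equals `((1+l)/λ)·s₁s₂/(s₁+s₂)²`; hence
it is at most `(1+l)/(4λ)`, with equality iff the two signals are equal (so revealing no
information is optimal). -/
theorem expRev_eq_and_max (lam l s₁ s₂ : ℝ) (hlam : 0 < lam)
    (hl : l ∈ Set.Icc (0 : ℝ) 1) (hs₁ : 0 < s₁) (hs₂ : 0 < s₂) :
    expRev lam l s₁ s₂ = ((1 + l) / lam) * (s₁ * s₂) / (s₁ + s₂) ^ 2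
    ∧ expRev lam l s₁ s₂ ≤ (1 + l) / (4 * lam)
    ∧ (expRev lam l s₁ s₂ = (1 + l) / (4 * lam) ↔ s₁ = s₂) := by
  obtain ⟨hl0, hl1⟩ := hl
  have hc1 : 0 < s₂ / s₁ := by positivity
  have hc2 : 0 < s₁ / s₂ := by positivity
  have heq : expRev lam l s₁ s₂ = ((1 + l) / lam) * (s₁ * s₂) / (s₁ + s₂) ^ 2 := by
    have e1 := sideInt lam (s₂ / s₁) hlam hc1
    have e2 := sideInt lam (s₁ / s₂) hlam hc2
    simp_rw [mul_div_assoc] at *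
    unfold expRev
    simp_rw [mul_div_assoc]
    rw [e1, e2]
    have h12 : (s₁ + s₂) ≠ 0 := by positivity
    field_simp
    ring
  refine ⟨heq, ?_, ?_⟩
  · rw [heq]
    rw [div_mul_eq_mul_div, div_div, div_le_div_iff₀ (by positivity) (by positivity)]
    nlinarith [mul_nonneg (mul_nonneg (by linarith : (0:ℝ) ≤ 1 + l) hlam.le) (sq_nonneg (s₁ - s₂))]
  · rw [heq]
    constructor
    · intro h
      rw [div_mul_eq_mul_div, div_div, div_eq_div_iff (by positivity) (by positivity)] at h
      have h1l : 0 < 1 + l := by linarith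
      have h2 : (1 + l) * lam * (s₁ - s₂) ^ 2 = 0 := by linear_combination -h
      have h3 : (s₁ - s₂) ^ 2 = 0 := by
        rcases mul_eq_zero.1 h2 with h4 | h4
        · exact absurd h4 (by positivity)
        · exact h4
      have := pow_eq_zero_iff (n := 2) (by norm_num) |>.1 h3
      linarith
    · rintro rfl
      field_simp
      ring
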